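/- arXiv:2106.02970 — 2 statements merged into one kernel-verified Lean document; each statement's English description precedes it below -/
import Mathlib

section
/- Let X_1 and X_2 be independent exponential random variables with rates h_1 > 0 and h_2 > 0 respectively, and let 0 ≤ d_1 ≤ d_2 be shifts. Then E[ min(X_1 + d_1, X_2 + d_2) ] = d_1 + (1/h_1)·(1 − e^{-h_1 (d_2 − d_1)}) + (1/(h_1 + h_2))·e^{-h_1 (d_2 − d_1)}. (This is the expected inter-block time τ̄ in the two-miner coordinated blockchain model, Corollary 1 of the paper.) -/
open MeasureTheory ProbabilityTheory Real Set Filter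

lemma aux_expMeasure_Ioi {r : ℝ} (hr : 0 < r) (s : ℝ) :
    expMeasure r (Set.Ioi s) = ENNReal.ofReal (Real.exp (-(r * max s 0))) := by
  have : IsProbabilityMeasure (expMeasure r) := isProbabilityMeasure_expMeasure hr
  have h1 : expMeasure r (Set.Ioi s) = 1 - expMeasure r (Set.Iic s) := by
    rw [← Set.compl_Iic, measure_compl measurableSet_Iic (measure_ne_top _ _), measure_univ]
  have h2 : (cdf (expMeasure r)) s = if 0 ≤ s then 1 - Real.exp (-(r * s)) else 0 :=
    cdf_expMeasure_eq hr s
  rw [h1, ← ofReal_cdf (expMeasure r) s, h2]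
  rcases le_or_gt 0 s with hs | hs
  · rw [if_pos hs, max_eq_left hs]
    have he : Real.exp (-(r * s)) ≤ 1 := by
      rw [Real.exp_le_one_iff]; nlinarith
    refine ENNReal.sub_eq_of_eq_add ENNReal.ofReal_ne_top ?_
    rw [← ENNReal.ofReal_add (Real.exp_pos _).le (by linarith)]
    norm_num
  · rw [if_neg (not_le.mpr hs), max_eq_right hs.le]
    simp


lemma aux_integrable_id_expMeasure {r : ℝ} (hr : 0 < r) : Integrable id (expMeasure r) := by
  have hmeas : Measurable (gammaPDF 1 r) :=
    (measurable_gammaPDFReal 1 r).ennreal_ofReal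
  rw [expMeasure, gammaMeasure, integrable_withDensity_iff hmeas
    (Eventually.of_forall fun x => ENNReal.ofReal_lt_top)]
  have heq : (fun x : ℝ => id x * (gammaPDF 1 r x).toReal)
      = Set.indicator (Set.Ioi (0:ℝ)) (fun x => x * (r * Real.exp (-(r * x)))) := by
    funext x
    rw [gammaPDF, ENNReal.toReal_ofReal (gammaPDFReal_nonneg zero_lt_one hr x)]
    rcases lt_trichotomy x 0 with hx | hx | hx
    · rw [Set.indicator_of_notMem (by simpa using hx.le.not_gt)]
      simp [gammaPDFReal, not_le.mpr hx]
    · subst hx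
      rw [Set.indicator_of_notMem (by simp)]
      simp
    · rw [Set.indicator_of_mem (by simpa using hx)]
      simp only [gammaPDFReal, if_pos hx.le, Real.rpow_one, Real.Gamma_one, div_one, sub_self,
        Real.rpow_zero, mul_one, id]
  rw [heq, integrable_indicator_iff measurableSet_Ioi]
  have hbase : IntegrableOn (fun x : ℝ => x * Real.exp (-r * x)) (Set.Ioi 0) := by
    simpa [Real.rpow_one] using
      integrableOn_rpow_mul_exp_neg_mul_rpow (p := 1) (s := 1) (by norm_num) (by norm_num) hr
  have := hbase.const_mul r
  refine IntegrableOn.congr_fun this (fun x _ => by ring_nf) measurableSet_Ioi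


lemma aux_key_integral {h₁ h₂ d₁ d₂ : ℝ} (hh₁ : 0 < h₁) (hh₂ : 0 < h₂)
    (hd₁ : 0 ≤ d₁) (hd₁₂ : d₁ ≤ d₂) :
    ∫ t in Set.Ioi (0:ℝ),
        Real.exp (-(h₁ * max (t - d₁) 0)) * Real.exp (-(h₂ * max (t - d₂) 0)) =
      d₁ + (1 / h₁) * (1 - Real.exp (-(h₁ * (d₂ - d₁))))
        + (1 / (h₁ + h₂)) * Real.exp (-(h₁ * (d₂ - d₁))) := by
  set k : ℝ := h₁ + h₂ with hk
  have hkpos : 0 < k := by positivity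
  set f : ℝ → ℝ := fun t => Real.exp (-(h₁ * max (t - d₁) 0)) * Real.exp (-(h₂ * max (t - d₂) 0))
    with hf
  have hcont : Continuous f := by
    apply Continuous.mul
    · exact (continuous_const.mul ((continuous_id.sub continuous_const).max continuous_const)).neg.rexp
    · exact (continuous_const.mul ((continuous_id.sub continuous_const).max continuous_const)).neg.rexp
  have hd₂ : (0:ℝ) ≤ d₂ := le_trans hd₁ hd₁₂
  -- integrability on the tail
  have htail_eq : EqOn (fun t => Real.exp (h₁ * d₁ + h₂ * d₂) * Real.exp (-k * t)) f (Set.Ioi d₂) := by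
    intro t ht
    have ht2 : d₂ ≤ t := (le_of_lt ht)
    have ht1 : d₁ ≤ t := le_trans hd₁₂ ht2
    simp only [hf, max_eq_left (sub_nonneg.mpr ht1), max_eq_left (sub_nonneg.mpr ht2),
      ← Real.exp_add]
    ring_nf
    congr 1; rw [hk]; ring
  have htail_int : IntegrableOn f (Set.Ioi d₂) :=
    IntegrableOn.congr_fun ((exp_neg_integrableOn_Ioi d₂ hkpos).const_mul _) htail_eq
      measurableSet_Ioi
  have hioc_int : ∀ a b : ℝ, IntegrableOn f (Set.Ioc a b) := fun a b =>
    hcont.integrableOn_Ioc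
  -- split the domain
  have hsplit : ∫ t in Set.Ioi (0:ℝ), f t
      = (∫ t in Set.Ioc 0 d₁, f t) + (∫ t in Set.Ioc d₁ d₂, f t) + ∫ t in Set.Ioi d₂, f t := by
    rw [← Set.Ioc_union_Ioi_eq_Ioi hd₂,
      setIntegral_union Set.Ioc_disjoint_Ioi_same measurableSet_Ioi (hioc_int 0 d₂) htail_int,
      ← Set.Ioc_union_Ioc_eq_Ioc hd₁ hd₁₂,
      setIntegral_union (Set.Ioc_disjoint_Ioc_of_le le_rfl) measurableSet_Ioc (hioc_int 0 d₁) (hioc_int d₁ d₂)]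
  -- first piece
  have hP1 : ∫ t in Set.Ioc (0:ℝ) d₁, f t = d₁ := by
    rw [setIntegral_congr_fun measurableSet_Ioc (g := fun _ => (1:ℝ)) (fun t ht => by
      simp only [hf, max_eq_right (sub_nonpos.mpr ht.2), max_eq_right (sub_nonpos.mpr (le_trans ht.2 hd₁₂)),
        mul_zero, neg_zero, Real.exp_zero, mul_one])]
    simp [Real.volume_Ioc, ENNReal.toReal_ofReal hd₁, hd₁]
  -- second piece
  have hP2 : ∫ t in Set.Ioc d₁ d₂, f t = (1 / h₁) * (1 - Real.exp (-(h₁ * (d₂ - d₁)))) := by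
    rw [setIntegral_congr_fun measurableSet_Ioc (g := fun t => Real.exp (-(h₁ * (t - d₁)))) (fun t ht => by
      simp only [hf, max_eq_left (sub_nonneg.mpr ht.1.le), max_eq_right (sub_nonpos.mpr ht.2),
        mul_zero, neg_zero, Real.exp_zero, mul_one]),
      ← intervalIntegral.integral_of_le hd₁₂]
    have hderiv : ∀ t ∈ Set.uIcc d₁ d₂,
        HasDerivAt (fun t => -(1/h₁) * Real.exp (-(h₁ * (t - d₁)))) (Real.exp (-(h₁ * (t - d₁)))) t := by
      intro t _
      have h := ((((hasDerivAt_id t).sub_const d₁).const_mul h₁).neg.exp).const_mul (-(1/h₁))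
      refine h.congr_deriv ?_
      simp only [id, Pi.neg_apply]
      field_simp
    rw [intervalIntegral.integral_eq_sub_of_hasDerivAt hderiv (by
      apply Continuous.intervalIntegrable
      exact ((continuous_const.mul (continuous_id.sub continuous_const)).neg).rexp)]
    simp only [sub_self, mul_zero, neg_zero, Real.exp_zero, mul_one]
    ring
  -- third piece
  have hP3 : ∫ t in Set.Ioi d₂, f t = (1 / k) * Real.exp (-(h₁ * (d₂ - d₁))) := by
    rw [setIntegral_congr_fun measurableSet_Ioi htail_eq.symm]
    rw [MeasureTheory.integral_const_mul]
    have hI : ∫ t in Set.Ioi d₂, Real.exp (-k * t) = Real.exp (-k * d₂) / k := by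
      have hderiv : ∀ t ∈ Set.Ici d₂,
          HasDerivAt (fun t => -(1/k) * Real.exp (-k * t)) (Real.exp (-k * t)) t := by
        intro t _
        have h := (((hasDerivAt_id t).const_mul (-k)).exp).const_mul (-(1/k))
        refine h.congr_deriv ?_
        simp only [id]
        field_simp
      have htend : Tendsto (fun t => -(1/k) * Real.exp (-k * t)) atTop (nhds 0) := by
        have h1 : Tendsto (fun t : ℝ => -k * t) atTop atBot :=
          tendsto_id.const_mul_atTop_of_neg (by linarith)
        have := (Real.tendsto_exp_atBot.comp h1).const_mul (-(1/k))
        simpa using this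
      rw [integral_Ioi_of_hasDerivAt_of_tendsto' hderiv (exp_neg_integrableOn_Ioi d₂ hkpos) htend]
      field_simp
      ring
    rw [hI]
    rw [div_eq_mul_inv, ← mul_assoc, ← Real.exp_add]
    rw [show h₁ * d₁ + h₂ * d₂ + -k * d₂ = -(h₁ * (d₂ - d₁)) by rw [hk]; ring]
    ring
  rw [hsplit, hP1, hP2, hP3]

lemma aux_ae_nonneg {Ω : Type*} [MeasurableSpace Ω] (μ : Measure Ω) {r : ℝ} (hr : 0 < r)
    {X : Ω → ℝ} (hX : Measurable X) (hlaw : μ.map X = expMeasure r) : 0 ≤ᵐ[μ] X := by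
  change ∀ᵐ ω ∂μ, (0:ℝ) ≤ X ω
  rw [ae_iff]
  have hset : {ω | ¬ 0 ≤ X ω} = X ⁻¹' Set.Iio 0 := by ext ω; simp
  rw [hset, ← Measure.map_apply hX measurableSet_Iio, hlaw, expMeasure, gammaMeasure,
    withDensity_apply _ measurableSet_Iio]
  exact lintegral_gammaPDF_of_nonpos le_rfl

lemma aux_integrable_of_law {Ω : Type*} [MeasurableSpace Ω] (μ : Measure Ω) {r : ℝ} (hr : 0 < r)
    {X : Ω → ℝ} (hX : Measurable X) (hlaw : μ.map X = expMeasure r) : Integrable X μ := by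
  have h : Integrable id (μ.map X) := hlaw ▸ aux_integrable_id_expMeasure hr
  rw [integrable_map_measure aestronglyMeasurable_id hX.aemeasurable] at h
  exact h

/-- **Expected inter-block time in the two-miner coordinated setting (Corollary 1).**
If `X₁, X₂` are independent exponential random variables with rates `h₁, h₂ > 0`
and `0 ≤ d₁ ≤ d₂` are shifts, then
`E[min (X₁ + d₁) (X₂ + d₂)] = d₁ + (1/h₁)(1 − e^{-h₁(d₂−d₁)}) + (1/(h₁+h₂)) e^{-h₁(d₂−d₁)}`. -/
theorem expectation_min_two_shifted_exponentials
    {Ω : Type*} [MeasurableSpace Ω] (μ : Measure Ω) [IsProbabilityMeasure μ]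
    (h₁ h₂ : ℝ) (hh₁ : 0 < h₁) (hh₂ : 0 < h₂)
    (d₁ d₂ : ℝ) (hd₁ : 0 ≤ d₁) (hd₁₂ : d₁ ≤ d₂)
    (X₁ X₂ : Ω → ℝ) (hX₁ : Measurable X₁) (hX₂ : Measurable X₂)
    (hindep : IndepFun X₁ X₂ μ)
    (hlaw₁ : μ.map X₁ = expMeasure h₁) (hlaw₂ : μ.map X₂ = expMeasure h₂) :
    ∫ ω, min (X₁ ω + d₁) (X₂ ω + d₂) ∂μ =
      d₁ + (1 / h₁) * (1 - Real.exp (-(h₁ * (d₂ - d₁))))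
        + (1 / (h₁ + h₂)) * Real.exp (-(h₁ * (d₂ - d₁))) := by
  have hd₂ : (0:ℝ) ≤ d₂ := le_trans hd₁ hd₁₂
  have hint1 : Integrable X₁ μ := aux_integrable_of_law μ hh₁ hX₁ hlaw₁
  have hint2 : Integrable X₂ μ := aux_integrable_of_law μ hh₂ hX₂ hlaw₂
  have hYint : Integrable (fun ω => min (X₁ ω + d₁) (X₂ ω + d₂)) μ := by
    have := (hint1.add (integrable_const d₁)).inf (hint2.add (integrable_const d₂))
    exact this
  have hYnn : 0 ≤ᵐ[μ] fun ω => min (X₁ ω + d₁) (X₂ ω + d₂) := by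
    filter_upwards [aux_ae_nonneg μ hh₁ hX₁ hlaw₁, aux_ae_nonneg μ hh₂ hX₂ hlaw₂] with ω h1 h2
    exact le_min (by linarith) (by linarith)
  rw [hYint.integral_eq_integral_meas_lt hYnn]
  have htail : ∀ t : ℝ, (μ {a | t < min (X₁ a + d₁) (X₂ a + d₂)}).toReal
      = Real.exp (-(h₁ * max (t - d₁) 0)) * Real.exp (-(h₂ * max (t - d₂) 0)) := by
    intro t
    have hset : {a | t < min (X₁ a + d₁) (X₂ a + d₂)}
        = X₁ ⁻¹' Set.Ioi (t - d₁) ∩ X₂ ⁻¹' Set.Ioi (t - d₂) := by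
      ext ω
      simp [lt_min_iff, sub_lt_iff_lt_add]
    rw [hset, hindep.measure_inter_preimage_eq_mul _ _ measurableSet_Ioi measurableSet_Ioi,
      ← Measure.map_apply hX₁ measurableSet_Ioi, ← Measure.map_apply hX₂ measurableSet_Ioi,
      hlaw₁, hlaw₂, aux_expMeasure_Ioi hh₁, aux_expMeasure_Ioi hh₂, ENNReal.toReal_mul,
      ENNReal.toReal_ofReal (Real.exp_pos _).le, ENNReal.toReal_ofReal (Real.exp_pos _).le]
  simp_rw [Measure.real, htail]
  exact aux_key_integral hh₁ hh₂ hd₁ hd₁₂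
end

section
/- In the coordinated model, all miners have the same individual efficiency (i.e., each gets its fair share of blocks) if and only if they are all equidistant from the coordinator. Precisely: let X_1,…,X_n be independent exponential random variables with rates h_1,…,h_n > 0 and shifts d_1,…,d_n ≥ 0, and let p_i = P( X_i + d_i ≤ X_k + d_k for all k ). Then p_i/h_i = p_j/h_j for all pairs i, j if and only if d_1 = d_2 = ⋯ = d_n. -/
set_option maxHeartbeats 1600000
open MeasureTheory ProbabilityTheory Real Set
open scoped ENNReal

lemma expMeasure_Iic' {r : ℝ} (hr : 0 < r) (x : ℝ) :
    expMeasure r (Iic x) = ENNReal.ofReal (if 0 ≤ x then 1 - exp (-(r * x)) else 0) := by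
  have : IsProbabilityMeasure (expMeasure r) := isProbabilityMeasure_expMeasure hr
  rw [← ofReal_cdf (expMeasure r) x]
  congr 1
  exact cdf_expMeasure_eq hr x

lemma expMeasure_Ioi' {r : ℝ} (hr : 0 < r) (x : ℝ) :
    expMeasure r (Ioi x) = ENNReal.ofReal (exp (-(r * max x 0))) := by
  have : IsProbabilityMeasure (expMeasure r) := isProbabilityMeasure_expMeasure hr
  rw [← compl_Iic, prob_compl_eq_one_sub measurableSet_Iic, expMeasure_Iic' hr]
  rcases le_or_gt 0 x with hx | hx
  · rw [if_pos hx, max_eq_left hx]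
    have h1 : 0 ≤ 1 - exp (-(r * x)) := by
      have := exp_le_one_iff.mpr (by nlinarith : -(r * x) ≤ 0); linarith
    rw [← ENNReal.ofReal_one, ← ENNReal.ofReal_sub _ h1]
    ring_nf
  · rw [if_neg (not_le.mpr hx), max_eq_right hx.le]
    simp

lemma measurable_finset_inf' {Ω ι : Type*} [MeasurableSpace Ω] (s : Finset ι) (hs : s.Nonempty)
    (f : ι → Ω → ℝ) (hf : ∀ i, Measurable (f i)) :
    Measurable (fun ω => s.inf' hs fun i => f i ω) := by
  induction hs using Finset.Nonempty.cons_induction with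
  | singleton i => simpa using hf i
  | cons i s hi hs ih =>
      simp only [Finset.inf'_cons (H := hs)]
      exact (hf i).inf ih

lemma lintegral_exp_Ioo' {r : ℝ} (hr : 0 < r) (a y : ℝ) :
    ∫⁻ t in Ioo a y, ENNReal.ofReal (r * exp (-(r * (t - a)))) =
      ENNReal.ofReal (if 0 ≤ y - a then 1 - exp (-(r * (y - a))) else 0) := by
  rcases le_or_gt y a with hy | hy
  · rw [Ioo_eq_empty (by exact fun hlt => absurd hy (not_le.mpr hlt)), Measure.restrict_empty,
      lintegral_zero_measure]
    symm
    split_ifs with h0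
    · have : y - a = 0 := le_antisymm (by linarith) h0
      rw [this]; simp
    · simp
  · have hcont : Continuous fun t : ℝ => r * exp (-(r * (t - a))) := by fun_prop
    rw [← ofReal_integral_eq_lintegral_ofReal
        ((hcont.integrableOn_Icc (a := a) (b := y)).mono_set Ioo_subset_Icc_self)
        (Filter.Eventually.of_forall fun t => by positivity)]
    rw [if_pos (by linarith : (0:ℝ) ≤ y - a)]
    congr 1
    rw [← integral_Ioc_eq_integral_Ioo, ← intervalIntegral.integral_of_le hy.le]
    have hderiv : ∀ t ∈ Set.uIcc a y, HasDerivAt (fun t => -exp (-(r * (t - a))))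
        (r * exp (-(r * (t - a)))) t := by
      intro t _
      have h1 : HasDerivAt (fun t : ℝ => -(r * (t - a))) (-r) t := by
        exact (by simpa using (((hasDerivAt_id t).sub_const a).const_mul r).neg :
          HasDerivAt (-fun y => r * (y - a)) (-r) t)
      have := (Real.hasDerivAt_exp (-(r * (t - a)))).comp t h1
      exact (by simpa [mul_comm] using this.neg :
        HasDerivAt (-(rexp ∘ fun t => -(r * (t - a)))) (r * rexp (-(r * (t - a)))) t)
    rw [intervalIntegral.integral_eq_sub_of_hasDerivAt hderiv
        ((hcont.intervalIntegrable a y))]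
    simp [mul_comm]
    ring

lemma win_prob_eq {Ω : Type*} [MeasurableSpace Ω] (μ : Measure Ω) [IsProbabilityMeasure μ]
    (n : ℕ) (hn : 1 < n) (h d : Fin n → ℝ)
    (hh : ∀ k, 0 < h k)
    (X : Fin n → Ω → ℝ) (hXm : ∀ k, Measurable (X k))
    (hindep : iIndepFun X μ)
    (hlaw : ∀ k, μ.map (X k) = expMeasure (h k)) (i : Fin n) :
    μ {ω | ∀ k : Fin n, X i ω + d i ≤ X k ω + d k} =
      ENNReal.ofReal (h i) *
        ∫⁻ t in Ioi (d i), ∏ k, ENNReal.ofReal (exp (-(h k * max (t - d k) 0))) := by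
  classical
  -- tail of each X k
  have htail : ∀ (k : Fin n) (s : ℝ),
      μ (X k ⁻¹' Ioi s) = ENNReal.ofReal (exp (-(h k * max s 0))) := by
    intro k s
    rw [← Measure.map_apply (hXm k) measurableSet_Ioi, hlaw k, expMeasure_Ioi' (hh k)]
  set T : Finset (Fin n) := {i}ᶜ with hTdef
  have hT : T.Nonempty := by
    rw [← Finset.card_pos, Finset.card_compl, Finset.card_singleton, Fintype.card_fin]
    omega
  have hTa : T.attach.Nonempty := hT.attach
  set Y : Ω → ℝ := fun ω => T.attach.inf' hTa (fun k => X k.1 ω + d k.1) with hYdef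
  have hYm : Measurable Y :=
    measurable_finset_inf' T.attach hTa (fun k ω => X k.1 ω + d k.1)
      (fun k => (hXm k.1).add_const _)
  -- the winning set
  have hset : {ω | ∀ k : Fin n, X i ω + d i ≤ X k ω + d k} = {ω | X i ω + d i ≤ Y ω} := by
    ext ω
    simp only [mem_setOf_eq, hYdef, Finset.le_inf'_iff, Finset.mem_attach, true_implies,
      Subtype.forall]
    constructor
    · exact fun H k _ => H k
    · intro H k
      by_cases hk : k = i
      · subst hk; exact le_rfl
      · exact H k (by simp [hTdef, hk])
  -- independence of X i and Y
  have hYindep : IndepFun (X i) Y μ := by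
    have h1 := hindep.indepFun_finset {i} T (by simp [hTdef]) hXm
    have h2 := h1.comp (φ := fun v : ({i} : Finset (Fin n)) → ℝ => v ⟨i, Finset.mem_singleton_self i⟩)
      (ψ := fun v : {x // x ∈ T} → ℝ => T.attach.inf' hTa (fun k => v k + d k.1))
      (show Measurable (fun v : ({i} : Finset (Fin n)) → ℝ => v ⟨i, Finset.mem_singleton_self i⟩)
        from measurable_pi_apply _)
      (measurable_finset_inf' T.attach hTa (fun k (v : {x // x ∈ T} → ℝ) => v k + d k.1)
        (fun k => (measurable_pi_apply k).add_const _))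
    exact h2
  have hYprob : IsProbabilityMeasure (μ.map Y) := Measure.isProbabilityMeasure_map hYm.aemeasurable
  -- the tail of Y
  have hYtail : ∀ t : ℝ, (μ.map Y) (Ioi t) =
      ∏ k ∈ T, ENNReal.ofReal (exp (-(h k * max (t - d k) 0))) := by
    intro t
    rw [Measure.map_apply hYm measurableSet_Ioi]
    have hiff : ∀ ω, (t < Y ω) ↔ ∀ k ∈ T, t - d k < X k ω := by
      intro ω
      rw [hYdef, Finset.lt_inf'_iff]
      constructor
      · intro H k hk; have := H ⟨k, hk⟩ (Finset.mem_attach _ _); linarith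
      · intro H k _; have := H k.1 k.2; linarith
    have hYpre : Y ⁻¹' Ioi t = ⋂ k ∈ T, X k ⁻¹' Ioi (t - d k) := by
      ext ω
      simp only [mem_preimage, mem_Ioi, mem_iInter]
      exact hiff ω
    rw [hYpre, hindep.meas_biInter (fun k _ => ⟨Ioi (t - d k), measurableSet_Ioi, rfl⟩)]
    exact Finset.prod_congr rfl fun k _ => htail k _
  -- the joint law
  have hmap : μ.map (fun ω => (Y ω, X i ω)) = (μ.map Y).prod (μ.map (X i)) :=
    (indepFun_iff_map_prod_eq_prod_map_map hYm.aemeasurable (hXm i).aemeasurable).mp hYindep.symm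
  have hs : MeasurableSet {p : ℝ × ℝ | p.2 + d i ≤ p.1} :=
    measurableSet_le (measurable_snd.add_const _) measurable_fst
  haveI : IsProbabilityMeasure (expMeasure (h i)) := isProbabilityMeasure_expMeasure (hh i)
  have hp1 : μ {ω | ∀ k : Fin n, X i ω + d i ≤ X k ω + d k} =
      ∫⁻ y, expMeasure (h i) (Iic (y - d i)) ∂(μ.map Y) := by
    rw [hset]
    have : {ω | X i ω + d i ≤ Y ω} =
        (fun ω => (Y ω, X i ω)) ⁻¹' {p : ℝ × ℝ | p.2 + d i ≤ p.1} := rfl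
    rw [this, ← Measure.map_apply (hYm.prodMk (hXm i)) hs, hmap, hlaw i,
      Measure.prod_apply hs]
    congr 1
    ext y
    congr 1
    ext x
    simp [le_sub_iff_add_le]
  -- rewrite inner measure as an integral
  have hp2 : ∀ y : ℝ, expMeasure (h i) (Iic (y - d i)) =
      ∫⁻ t, (Ioo (d i) y).indicator
        (fun t => ENNReal.ofReal (h i * exp (-(h i * (t - d i))))) t := by
    intro y
    rw [expMeasure_Iic' (hh i), lintegral_indicator measurableSet_Ioo _,
      ← lintegral_exp_Ioo' (hh i) (d i) y]
  -- Fubini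
  set F : ℝ × ℝ → ℝ≥0∞ := fun p =>
    ({p : ℝ × ℝ | d i < p.2 ∧ p.2 < p.1}).indicator
      (fun p => ENNReal.ofReal (h i * exp (-(h i * (p.2 - d i))))) p with hFdef
  have hFm : Measurable F := by
    apply Measurable.indicator
    · fun_prop
    · exact (measurableSet_lt measurable_const measurable_snd).inter
        (measurableSet_lt measurable_snd measurable_fst)
  have hFeq : ∀ y t : ℝ, (Ioo (d i) y).indicator
      (fun t => ENNReal.ofReal (h i * exp (-(h i * (t - d i))))) t = F (y, t) := by
    intro y t
    simp only [hFdef]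
    by_cases ht : d i < t ∧ t < y
    · rw [Set.indicator_of_mem (mem_Ioo.mpr ht), Set.indicator_of_mem (by exact ht)]
    · rw [Set.indicator_of_notMem (fun hc => ht (mem_Ioo.mp hc)),
        Set.indicator_of_notMem (by exact ht)]
  have hswap : ∫⁻ y, ∫⁻ t, F (y, t) ∂volume ∂(μ.map Y)
      = ∫⁻ t, ∫⁻ y, F (y, t) ∂(μ.map Y) ∂volume :=
    lintegral_lintegral_swap hFm.aemeasurable
  have hinner : ∀ t : ℝ, (∫⁻ y, F (y, t) ∂(μ.map Y)) =
      (Ioi (d i)).indicator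
        (fun t => ENNReal.ofReal (h i * exp (-(h i * (t - d i)))) * (μ.map Y) (Ioi t)) t := by
    intro t
    by_cases ht : d i < t
    · rw [Set.indicator_of_mem (by exact ht)]
      have hF : ∀ y : ℝ, F (y, t) =
          (Ioi t).indicator (fun _ => ENNReal.ofReal (h i * exp (-(h i * (t - d i))))) y := by
        intro y
        simp only [hFdef]
        by_cases hy : t < y
        · rw [Set.indicator_of_mem
              (show (y, t) ∈ {p : ℝ × ℝ | d i < p.2 ∧ p.2 < p.1} from ⟨ht, hy⟩),
            Set.indicator_of_mem (show y ∈ Ioi t from hy)]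
        · rw [Set.indicator_of_notMem
              (show (y, t) ∉ {p : ℝ × ℝ | d i < p.2 ∧ p.2 < p.1} from fun hc => hy hc.2),
            Set.indicator_of_notMem (show y ∉ Ioi t from hy)]
      simp_rw [hF]
      rw [lintegral_indicator measurableSet_Ioi _, setLIntegral_const]
    · rw [Set.indicator_of_notMem (by exact ht)]
      have hF : ∀ y : ℝ, F (y, t) = 0 := fun y =>
        Set.indicator_of_notMem (fun hc => ht hc.1) _
      simp [hF]
  calc μ {ω | ∀ k : Fin n, X i ω + d i ≤ X k ω + d k}
      = ∫⁻ y, ∫⁻ t, F (y, t) ∂volume ∂(μ.map Y) := by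
        rw [hp1]
        exact lintegral_congr fun y => by
          rw [hp2 y]; exact lintegral_congr fun t => hFeq y t
    _ = ∫⁻ t, ∫⁻ y, F (y, t) ∂(μ.map Y) ∂volume := hswap
    _ = ∫⁻ t, (Ioi (d i)).indicator
          (fun t => ENNReal.ofReal (h i * exp (-(h i * (t - d i)))) * (μ.map Y) (Ioi t)) t
            ∂volume := lintegral_congr hinner
    _ = ∫⁻ t in Ioi (d i),
          ENNReal.ofReal (h i * exp (-(h i * (t - d i)))) * (μ.map Y) (Ioi t) ∂volume :=
        lintegral_indicator measurableSet_Ioi _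
    _ = ENNReal.ofReal (h i) *
          ∫⁻ t in Ioi (d i), ∏ k, ENNReal.ofReal (exp (-(h k * max (t - d k) 0))) := by
        rw [← lintegral_const_mul' _ _ ENNReal.ofReal_ne_top]
        apply setLIntegral_congr_fun measurableSet_Ioi
        intro t ht
        have hmax : max (t - d i) 0 = t - d i := max_eq_left (by simp only [mem_Ioi] at ht; linarith)
        beta_reduce
        rw [hYtail t, ENNReal.ofReal_mul (hh i).le, mul_assoc]
        congr 1
        rw [← Finset.prod_mul_prod_compl ({i} : Finset (Fin n)), Finset.prod_singleton, hmax]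

/-- **Fairness holds if and only if all miners are equidistant from the
coordinator.** If `X 0, …, X (n-1)` are independent exponential random variables
with rates `h 0, …, h (n-1) > 0` and nonnegative shifts `d`, and
`p i = P(X i + d i ≤ X k + d k for all k)`, then `p i / h i = p j / h j` for all
pairs `i, j` if and only if all the shifts `d i` are equal. -/
theorem equal_efficiency_iff_equidistant
    {Ω : Type*} [MeasurableSpace Ω] (μ : Measure Ω) [IsProbabilityMeasure μ]
    (n : ℕ) (h d : Fin n → ℝ)
    (hh : ∀ k, 0 < h k) (hd : ∀ k, 0 ≤ d k)
    (X : Fin n → Ω → ℝ) (hXm : ∀ k, Measurable (X k))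
    (hindep : iIndepFun X μ)
    (hlaw : ∀ k, μ.map (X k) = expMeasure (h k)) :
    (∀ i j : Fin n,
        (μ {ω | ∀ k : Fin n, X i ω + d i ≤ X k ω + d k}).toReal / h i =
          (μ {ω | ∀ k : Fin n, X j ω + d j ≤ X k ω + d k}).toReal / h j) ↔
      ∀ i j : Fin n, d i = d j := by
  classical
  by_cases hn : n ≤ 1
  · haveI : Subsingleton (Fin n) := by
      rcases Nat.le_one_iff_eq_zero_or_eq_one.mp hn with rfl | rfl <;> infer_instance
    constructor <;> intro _ i j <;> rw [Subsingleton.elim i j]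
  · push_neg at hn
    set G : ℝ → ℝ≥0∞ := fun t => ∏ k, ENNReal.ofReal (exp (-(h k * max (t - d k) 0)))
      with hGdef
    set J : ℝ → ℝ≥0∞ := fun a => ∫⁻ t in Ioi a, G t with hJdef
    have hGm : Measurable G := by
      rw [hGdef]
      exact Finset.measurable_prod _ fun k _ => by fun_prop
    have hp : ∀ i, μ {ω | ∀ k : Fin n, X i ω + d i ≤ X k ω + d k} =
        ENNReal.ofReal (h i) * J (d i) :=
      fun i => win_prob_eq μ n hn h d hh X hXm hindep hlaw i
    have hGpos : ∀ t, 0 < G t := fun t =>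
      pos_iff_ne_zero.mpr (Finset.prod_ne_zero_iff.mpr fun k _ => (ENNReal.ofReal_pos.mpr (exp_pos _)).ne')
    have hfac : ∀ (i : Fin n) (t : ℝ),
        G t ≤ ENNReal.ofReal (exp (-(h i * max (t - d i) 0))) := by
      intro i t
      rw [hGdef]
      show (∏ k, ENNReal.ofReal (exp (-(h k * max (t - d k) 0)))) ≤ _
      rw [← Finset.prod_mul_prod_compl ({i} : Finset (Fin n)), Finset.prod_singleton]
      refine mul_le_of_le_one_right' (Finset.prod_le_one' fun k _ => ?_)
      refine ENNReal.ofReal_le_one.mpr (exp_le_one_iff.mpr ?_)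
      have := mul_nonneg (hh k).le (le_max_right (t - d k) 0)
      linarith
    have hJfin : ∀ i, J (d i) ≠ ⊤ := by
      intro i
      have hint : IntegrableOn (fun t => exp (h i * d i) * exp (-(h i) * t))
          (Ioi (d i)) volume := (exp_neg_integrableOn_Ioi (d i) (hh i)).const_mul _
      have hb : J (d i) ≤
          ∫⁻ t in Ioi (d i), ENNReal.ofReal (exp (h i * d i) * exp (-(h i) * t)) := by
        simp only [hJdef]
        refine setLIntegral_mono (by fun_prop) fun t ht => ?_
        refine le_trans (hfac i t) (le_of_eq ?_)
        congr 1
        rw [← exp_add, max_eq_left (by simp only [mem_Ioi] at ht; linarith)]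
        ring_nf
      refine ne_top_of_le_ne_top ?_ hb
      rw [← ofReal_integral_eq_lintegral_ofReal hint
        (ae_of_all _ fun t => by positivity)]
      exact ENNReal.ofReal_ne_top
    have hstrict : ∀ a b : ℝ, a < b → J b ≠ ⊤ → J b < J a := by
      intro a b hab htop
      have hsplit : J a = J b + ∫⁻ t in Ioc a b, G t := by
        simp only [hJdef]
        rw [← Ioc_union_Ioi_eq_Ioi hab.le,
          lintegral_union measurableSet_Ioi (Ioc_disjoint_Ioi le_rfl), add_comm]
      have hpos : (∫⁻ t in Ioc a b, G t) ≠ 0 := by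
        have hGanti : ∀ t ∈ Ioc a b, G b ≤ G t := by
          intro t ht
          rw [hGdef]
          refine Finset.prod_le_prod' fun k _ => ENNReal.ofReal_le_ofReal (exp_le_exp.mpr ?_)
          have h1 : max (t - d k) 0 ≤ max (b - d k) 0 :=
            max_le_max (by have := ht.2; linarith) le_rfl
          have := (hh k).le
          nlinarith
        have hle : G b * volume (Ioc a b) ≤ ∫⁻ t in Ioc a b, G t := by
          rw [← setLIntegral_const]
          exact setLIntegral_mono hGm hGanti
        refine fun h0 => ?_
        have := hle.trans_eq h0
        rw [Real.volume_Ioc] at this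
        have h2 : G b * ENNReal.ofReal (b - a) ≠ 0 :=
          mul_ne_zero (hGpos b).ne' (ENNReal.ofReal_pos.mpr (by linarith)).ne'
        exact h2 (le_antisymm this zero_le)
      rw [hsplit]
      exact ENNReal.lt_add_right htop hpos
    have hratio : ∀ i, (μ {ω | ∀ k : Fin n, X i ω + d i ≤ X k ω + d k}).toReal / h i =
        (J (d i)).toReal := by
      intro i
      rw [hp i, ENNReal.toReal_mul, ENNReal.toReal_ofReal (hh i).le, mul_comm,
        mul_div_assoc, div_self (hh i).ne', mul_one]
    constructor
    · intro hEq i j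
      have h1 : (J (d i)).toReal = (J (d j)).toReal := by
        have := hEq i j; rwa [hratio i, hratio j] at this
      have h2 : J (d i) = J (d j) :=
        (ENNReal.toReal_eq_toReal_iff' (hJfin i) (hJfin j)).mp h1
      rcases lt_trichotomy (d i) (d j) with hij | hij | hij
      · exact absurd h2.symm (hstrict _ _ hij (hJfin j)).ne
      · exact hij
      · exact absurd h2 (hstrict _ _ hij (hJfin i)).ne
    · intro hAll i j
      rw [hratio i, hratio j, hAll i j]
end
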